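/- (Table 3, second row.) Assume r_A ≤ 1, r_A < r_D, and q_I ≥ (1/(r_A + 1))² − 1/2. Then (r_A, 1, 0) is a Nash equilibrium of the game with objectives (J_A, J_D, J_I): J_A(r_A,1,0) ≤ J_A(α,1,0) for all α ∈ (0,1], J_D(r_A,1,0) ≤ J_D(r_A,β,0) for all β ∈ (0,1], and J_I(r_A,1,0) ≥ J_I(r_A,1,γ) for all γ ∈ [0,1]. -/

import Mathlib

/-- Attacker's average cost. -/
noncomputable def JA (pA qA α β γ : ℝ) : ℝ :=
  (pA * (1 - γ) ^ 2 + qA * α ^ 2 + γ ^ 2) * (β / (α + β)) ^ 2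

/-- Defender's average cost. -/
noncomputable def JD (pD qD α β γ : ℝ) : ℝ :=
  (pD * (1 - γ) ^ 2 + qD * β ^ 2 + γ ^ 2) * (α / (α + β)) ^ 2

/-- Insider's average profit. -/
noncomputable def JI (pI qI α β γ : ℝ) : ℝ :=
  (pI + γ ^ 2) * (β / (α + β)) ^ 2 - (qI * γ + γ ^ 2 / 2)

/-- Attacker's reduced cost (no cooperation with the insider): J_A⁰(α,β) = J_A(α,β,0). -/
noncomputable def JA0 (pA qA α β : ℝ) : ℝ := JA pA qA α β 0

/-- Defender's reduced cost (unaware of the insider): J_D⁰(α,β) = J_D(α,β,0). -/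
noncomputable def JD0 (pD qD α β : ℝ) : ℝ := JD pD qD α β 0


/-- Table 3, second row. -/
theorem table3_second_row (pA pD pI qA qD qI rA rD : ℝ)
    (hpA : pA ∈ Set.Ioo (0:ℝ) 1) (hpD : pD ∈ Set.Ioo (0:ℝ) 1) (hpI : pI ∈ Set.Ioo (0:ℝ) 1)
    (hqA : 0 < qA) (hqD : 0 < qD) (hqI : 0 ≤ qI)
    (hrA : rA = pA / qA) (hrD : rD = pD / qD)
    (h1 : rA ≤ 1) (h2 : rA < rD)
    (h3 : (1 / (rA + 1)) ^ 2 - 1 / 2 ≤ qI) :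
    (∀ α ∈ Set.Ioc (0:ℝ) 1, JA pA qA rA 1 0 ≤ JA pA qA α 1 0) ∧
    (∀ β ∈ Set.Ioc (0:ℝ) 1, JD pD qD rA 1 0 ≤ JD pD qD rA β 0) ∧
    (∀ γ ∈ Set.Icc (0:ℝ) 1, JI pI qI rA 1 γ ≤ JI pI qI rA 1 0) := by
  obtain ⟨hpA0, hpA1⟩ := hpA
  obtain ⟨hpD0, hpD1⟩ := hpD
  obtain ⟨hpI0, hpI1⟩ := hpI
  have hrA0 : 0 < rA := hrA ▸ div_pos hpA0 hqA
  have hpAr : pA = qA * rA := by rw [hrA, mul_div_assoc', mul_div_cancel_left₀ _ hqA.ne']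
  have hpDr : qD * rA < pD := by
    have h2' : rA < pD / qD := hrD ▸ h2
    calc qD * rA < qD * (pD / qD) := by exact (mul_lt_mul_iff_right₀ hqD).mpr h2'
    _ = pD := by field_simp
  refine ⟨?_, ?_, ?_⟩
  · intro α hα
    obtain ⟨hα0, hα1⟩ := hα
    simp only [JA]
    have h1p : (0:ℝ) < rA + 1 := by linarith
    have h2p : (0:ℝ) < α + 1 := by linarith
    rw [div_pow, div_pow, one_pow, mul_one_div, mul_one_div, div_le_div_iff₀ (by positivity) (by positivity)]
    nlinarith [mul_nonneg (mul_nonneg hqA.le h1p.le) (sq_nonneg (rA - α)), sq_nonneg (rA - α)]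
  · intro β hβ
    obtain ⟨hβ0, hβ1⟩ := hβ
    simp only [JD]
    have h1p : (0:ℝ) < rA + 1 := by linarith
    have h2p : (0:ℝ) < rA + β := by linarith
    have key : 0 ≤ (pD + qD * β ^ 2) * (rA + 1) ^ 2 - (pD + qD) * (rA + β) ^ 2 := by
      nlinarith [mul_nonneg (mul_nonneg (sub_nonneg.2 hβ1) (sub_pos.2 hpDr).le)
          (by linarith : (0:ℝ) ≤ 1 + β + 2 * rA),
        mul_nonneg (mul_nonneg (mul_pos hqD hrA0).le (sq_nonneg (1 - β)))
          (by linarith : (0:ℝ) ≤ 1 + rA)]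
    rw [div_pow, div_pow, ← mul_div_assoc, ← mul_div_assoc, div_le_div_iff₀ (by positivity) (by positivity)]
    nlinarith [mul_nonneg (sq_nonneg rA) key]
  · intro γ hγ
    obtain ⟨hγ0, hγ1⟩ := hγ
    simp only [JI]
    nlinarith [mul_nonneg hqI (mul_nonneg hγ0 (sub_nonneg.2 hγ1)),
      mul_nonneg (sq_nonneg γ) (sub_nonneg.2 h3)]
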